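/- Let q > 2 be a prime power and let s, t be natural numbers with 1 ≤ s ≤ t and gcd(s,t) = 1. For every polynomial f(x,y,z) = A + B·x + C·y + D·z + E·x^s·y^t·z with (A,B,C,D,E) ≠ (0,0,0,0,0), one has Z(f) ≤ (q−2)^2 + (s+t)·q; equivalently, the minimum distance of the toric code C_{P^{(3,2)}(s,t)} over 𝔽_q is at least (q−1)^3 − (q−2)^2 − (s+t)·q. -/

import Mathlib

/-- `Zf f` is the number of points `(x,y,z) ∈ (Fˣ)³` with `f (x,y,z) = 0`. -/
noncomputable def Zf {F : Type} [Field F] [Fintype F]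
    (f : Fˣ × Fˣ × Fˣ → F) : ℕ :=
  Nat.card {v : Fˣ × Fˣ × Fˣ // f v = 0}

/-- The polynomial `A + B·x + C·y + D·z + E·x^s·y^t·z` from the
signature-(3,2) polytope `P^{(3,2)}(s,t)`, evaluated on `(Fˣ)³`. -/
def fP32 {F : Type} [Field F] (s t : ℕ) (A B C D E : F)
    (v : Fˣ × Fˣ × Fˣ) : F :=
  A + B * (v.1 : F) + C * (v.2.1 : F) + D * (v.2.2 : F) +
    E * (v.1 : F) ^ s * (v.2.1 : F) ^ t * (v.2.2 : F)


private lemma fiber_card {F : Type} [Field F] [Fintype F] (s t : ℕ)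
    (hst : Nat.gcd s t = 1) (c : Fˣ) :
    Nat.card {p : Fˣ × Fˣ // p.1 ^ s * p.2 ^ t = c} = Fintype.card F - 1 := by
  classical
  set φ : Fˣ × Fˣ →* Fˣ :=
    { toFun := fun p => p.1 ^ s * p.2 ^ t
      map_one' := by simp
      map_mul' := by
        intro a b
        simp [mul_pow, mul_mul_mul_comm] } with hφ
  have habz : (s : ℤ) * Nat.gcdA s t + (t : ℤ) * Nat.gcdB s t = 1 := by
    have := Nat.gcd_eq_gcd_ab s t
    rw [hst] at this
    exact_mod_cast this.symm
  have hsurj : Function.Surjective φ := by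
    intro g
    refine ⟨(g ^ Nat.gcdA s t, g ^ Nat.gcdB s t), ?_⟩
    show (g ^ Nat.gcdA s t) ^ s * (g ^ Nat.gcdB s t) ^ t = g
    rw [← zpow_natCast (g ^ Nat.gcdA s t) s, ← zpow_natCast (g ^ Nat.gcdB s t) t,
      ← zpow_mul, ← zpow_mul, ← zpow_add, ← zpow_one g]
    congr 1
    rw [zpow_one]
    linear_combination habz
  have hker : Nat.card φ.ker = Fintype.card F - 1 := by
    have h1 : Nat.card (Fˣ × Fˣ) = Nat.card ((Fˣ × Fˣ) ⧸ φ.ker) * Nat.card φ.ker :=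
      Subgroup.card_eq_card_quotient_mul_card_subgroup _
    have h2 : Nat.card ((Fˣ × Fˣ) ⧸ φ.ker) = Fintype.card F - 1 := by
      rw [Nat.card_congr (QuotientGroup.quotientKerEquivOfSurjective φ hsurj).toEquiv]
      simp [Nat.card_eq_fintype_card, Fintype.card_units]
    have h3 : Nat.card (Fˣ × Fˣ) = (Fintype.card F - 1) * (Fintype.card F - 1) := by
      simp [Nat.card_eq_fintype_card, Fintype.card_units]
    rw [h2, h3] at h1
    have hpos : 0 < Fintype.card F - 1 := by
      have : 1 < Fintype.card F := Fintype.one_lt_card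
      omega
    exact (Nat.eq_of_mul_eq_mul_left hpos h1.symm)
  obtain ⟨p0, hp0⟩ := hsurj c
  have e : {p : Fˣ × Fˣ // p.1 ^ s * p.2 ^ t = c} ≃ φ.ker :=
    { toFun := fun q => ⟨q.1 * p0⁻¹, by
        have hq : φ q.1 = c := q.2
        simp [MonoidHom.mem_ker, map_mul, hq, hp0]⟩
      invFun := fun k => ⟨k.1 * p0, by
        have hk : φ k.1 = 1 := k.2
        show φ (k.1 * p0) = c
        simp [map_mul, hk, hp0]⟩
      left_inv := fun q => by ext1; simp [mul_assoc]
      right_inv := fun k => by ext1; simp [mul_assoc] }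
  rw [Nat.card_congr e, hker]


private lemma card_le_natDegree {F : Type} [Field F] {α : Type} [DecidableEq α]
    (S : Finset α) (P : Polynomial F) (hP : P ≠ 0) (n : ℕ) (hdeg : P.natDegree ≤ n)
    (φ : α → F) (hroot : ∀ a ∈ S, P.eval (φ a) = 0) (hinj : Set.InjOn φ S) :
    S.card ≤ n := by
  classical
  have h1 : S.card ≤ P.roots.toFinset.card := by
    apply Finset.card_le_card_of_injOn φ _ hinj
    intro a ha
    simp only [Finset.mem_coe, Multiset.mem_toFinset, Polynomial.mem_roots hP, Polynomial.IsRoot]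
    exact hroot a ha
  exact h1.trans ((Multiset.toFinset_card_le _).trans ((P.card_roots').trans hdeg))

set_option maxHeartbeats 2000000 in
/-- Every nonzero `f = A + B·x + C·y + D·z + E·x^s·y^t·z` has
`Z(f) ≤ (q−2)² + (s+t)·q`; equivalently the minimum distance of
`C_{P^{(3,2)}(s,t)}` is at least `(q−1)³ − (q−2)² − (s+t)·q`. -/
theorem stmt14 (F : Type) [Field F] [Fintype F] (s t : ℕ)
    (hq : 2 < Fintype.card F) (hs : 1 ≤ s) (hst' : s ≤ t)
    (hst : Nat.gcd s t = 1)
    (A B C D E : F) (hne : (A, B, C, D, E) ≠ (0, 0, 0, 0, 0)) :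
    Zf (fP32 s t A B C D E) ≤
      (Fintype.card F - 2) ^ 2 + (s + t) * Fintype.card F := by
  classical
  set q := Fintype.card F with hqdef
  set g : Fˣ × Fˣ → F := fun p => A + B * (p.1 : F) + C * (p.2 : F) with hgdef
  set h : Fˣ × Fˣ → F := fun p => D + E * (p.1 : F) ^ s * (p.2 : F) ^ t with hhdef
  set T : Finset (Fˣ × Fˣ) := Finset.univ.filter (fun p => h p = 0) with hTdef
  set Gs : Finset (Fˣ × Fˣ) := Finset.univ.filter (fun p => g p = 0) with hGdef
  set Sol : Finset (Fˣ × Fˣ × Fˣ) :=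
    Finset.univ.filter (fun v => fP32 s t A B C D E v = 0) with hSdef
  set pr : Fˣ × Fˣ × Fˣ → Fˣ × Fˣ := fun v => (v.1, v.2.1) with hprdef
  set I := (T ∩ Gs).card with hIdef
  have hZ : Zf (fP32 s t A B C D E) = Sol.card := by
    rw [Zf, Nat.card_eq_fintype_card, hSdef]
    exact Fintype.card_subtype _
  have hf : ∀ v : Fˣ × Fˣ × Fˣ,
      fP32 s t A B C D E v = g (pr v) + h (pr v) * (v.2.2 : F) := by
    intro v; simp only [fP32, hgdef, hhdef, hprdef]; ring
  have hcardU : Fintype.card Fˣ = q - 1 := by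
    rw [hqdef]; convert Fintype.card_units (α := F) using 2
  have hq1 : (1:ℕ) ≤ q - 1 := by omega
  set S1 : Finset (Fˣ × Fˣ) :=
    Finset.univ.filter (fun p => ¬(h p = 0 ∨ g p = 0)) with hS1def
  have hsplit : (Sol.filter (fun v => h (pr v) = 0)).card
      + (Sol.filter (fun v => ¬ h (pr v) = 0)).card = Sol.card :=
    Finset.card_filter_add_card_filter_not _
  have hSol2 : (Sol.filter (fun v => h (pr v) = 0)).card ≤ (q - 1) * I := by
    apply Finset.card_le_mul_card_image_of_maps_to (t := T ∩ Gs)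
    · intro v hv
      simp only [hSdef, Finset.mem_filter, Finset.mem_univ, true_and] at hv
      obtain ⟨hv1, hv2⟩ := hv
      rw [hf v, hv2, zero_mul, add_zero] at hv1
      simp only [Finset.mem_inter, hTdef, hGdef, Finset.mem_filter, Finset.mem_univ,
        true_and]
      exact ⟨hv2, hv1⟩
    · intro b _
      calc ((Sol.filter (fun v => h (pr v) = 0)).filter (fun v => pr v = b)).card
          ≤ (Finset.univ : Finset Fˣ).card := by
            apply Finset.card_le_card_of_injOn (fun v => v.2.2)
            · intro v _; exact Finset.mem_univ _
            · intro v hv w hw hvw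
              simp only [Finset.mem_coe, Finset.mem_filter] at hv hw
              have h1 : pr v = pr w := hv.2.trans hw.2.symm
              have h2 : v.1 = w.1 := congrArg (Prod.fst : Fˣ × Fˣ → Fˣ) h1
              have h3 : v.2.1 = w.2.1 := congrArg (Prod.snd : Fˣ × Fˣ → Fˣ) h1
              exact Prod.ext h2 (Prod.ext h3 hvw)
        _ = q - 1 := by rw [Finset.card_univ]; exact hcardU
  have hSol1 : (Sol.filter (fun v => ¬ h (pr v) = 0)).card ≤ S1.card := by
    apply Finset.card_le_card_of_injOn pr
    · intro v hv
      simp only [Finset.mem_coe, hSdef, Finset.mem_filter, Finset.mem_univ, true_and] at hv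
      obtain ⟨hv1, hv2⟩ := hv
      simp only [Finset.mem_coe, hS1def, Finset.mem_filter, Finset.mem_univ, true_and, not_or]
      refine ⟨hv2, ?_⟩
      intro hg0
      rw [hf v, hg0, zero_add, mul_eq_zero] at hv1
      rcases hv1 with h0 | h0
      · exact hv2 h0
      · exact (v.2.2).ne_zero h0
    · intro v hv w hw hvw
      simp only [Finset.mem_coe, Finset.mem_filter, hSdef, Finset.mem_univ,
        true_and] at hv hw
      have h2 : v.1 = w.1 := congrArg (Prod.fst : Fˣ × Fˣ → Fˣ) hvw
      have h3 : v.2.1 = w.2.1 := congrArg (Prod.snd : Fˣ × Fˣ → Fˣ) hvw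
      have hfv := hv.1
      have hfw := hw.1
      rw [hf v] at hfv
      rw [hf w] at hfw
      rw [hvw] at hfv
      have hz : (v.2.2 : F) = (w.2.2 : F) := by
        have hne0 : h (pr w) ≠ 0 := hw.2
        have : h (pr w) * (v.2.2 : F) = h (pr w) * (w.2.2 : F) := by
          linear_combination hfv - hfw
        exact mul_left_cancel₀ hne0 this
      exact Prod.ext h2 (Prod.ext h3 (Units.ext hz))
  have hunion : S1.card + (T ∪ Gs).card = (q - 1) ^ 2 := by
    have hTG : T ∪ Gs = Finset.univ.filter (fun p => h p = 0 ∨ g p = 0) := by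
      ext p
      simp [hTdef, hGdef, Finset.mem_union, Finset.mem_filter]
    rw [hTG, hS1def, Nat.add_comm,
      Finset.card_filter_add_card_filter_not (fun p => h p = 0 ∨ g p = 0)]
    rw [Finset.card_univ, Fintype.card_prod, hcardU, sq]
  have hinterc : (T ∪ Gs).card + I = T.card + Gs.card :=
    Finset.card_union_add_card_inter T Gs
  have hqI : (q - 1) * I + I = q * I := by
    have hq' : q - 1 + 1 = q := by omega
    calc (q - 1) * I + I = (q - 1 + 1) * I := by ring
      _ = q * I := by rw [hq']
  have master : Sol.card + T.card + Gs.card ≤ (q - 1) ^ 2 + q * I := by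
    linarith [hsplit, hSol2, hSol1, hunion, hinterc, hqI]
  have hst2 : 2 ≤ s + t := by omega
  have hfin : ∀ n : ℕ, n ≤ (q - 1) ^ 2 → n ≤ (q - 2) ^ 2 + (s + t) * q := by
    intro n hn
    have h1 : (q - 1) ^ 2 ≤ (q - 2) ^ 2 + 2 * q := by
      obtain ⟨a, ha⟩ : ∃ a, q = a + 3 := ⟨q - 3, by omega⟩
      have e1 : q - 1 = a + 2 := by omega
      have e2 : q - 2 = a + 1 := by omega
      rw [e1, e2, ha]; nlinarith
    have h2 : 2 * q ≤ (s + t) * q := Nat.mul_le_mul_right q hst2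
    linarith
  have hcardUniv : (Finset.univ : Finset Fˣ).card = q - 1 := by
    rw [Finset.card_univ]; exact hcardU
  have hGline : (¬(B = 0 ∧ C = 0)) → Gs.card ≤ q - 1 := by
    intro hBC
    by_cases hC : C = 0
    · have hB : B ≠ 0 := fun hB => hBC ⟨hB, hC⟩
      calc Gs.card ≤ (Finset.univ : Finset Fˣ).card := by
            apply Finset.card_le_card_of_injOn (fun p => p.2)
            · intro p _; exact Finset.mem_univ _
            · intro p hp w hw hpw
              simp only [Finset.mem_coe, hGdef, Finset.mem_filter, Finset.mem_univ,
                true_and, hgdef] at hp hw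
              rw [hC] at hp hw
              have hBx : B * (p.1 : F) = B * (w.1 : F) := by linear_combination hp - hw
              exact Prod.ext (Units.ext (mul_left_cancel₀ hB hBx)) hpw
        _ = q - 1 := hcardUniv
    · calc Gs.card ≤ (Finset.univ : Finset Fˣ).card := by
            apply Finset.card_le_card_of_injOn (fun p => p.1)
            · intro p _; exact Finset.mem_univ _
            · intro p hp w hw hpw
              simp only [Finset.mem_coe, hGdef, Finset.mem_filter, Finset.mem_univ,
                true_and, hgdef] at hp hw
              have hpw' : p.1 = w.1 := hpw
              rw [hpw'] at hp
              have hCy : C * (p.2 : F) = C * (w.2 : F) := by linear_combination hp - hw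
              exact Prod.ext hpw' (Units.ext (mul_left_cancel₀ hC hCy))
        _ = q - 1 := hcardUniv
  rw [hZ]
  by_cases hE : E = 0
  · by_cases hD : D = 0
    · -- T = univ
      have hTuniv : T = Finset.univ := by
        ext p; simp [hTdef, hhdef, hD, hE]
      have hIeq : I = Gs.card := by
        rw [hIdef, hTuniv, Finset.univ_inter]
      have hTcard : T.card = (q - 1) ^ 2 := by
        rw [hTuniv, Finset.card_univ, Fintype.card_prod, hcardU, sq]
      have hqG : (q - 1) * Gs.card + Gs.card = q * Gs.card := by
        have hq' : q - 1 + 1 = q := by omega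
        calc (q - 1) * Gs.card + Gs.card = (q - 1 + 1) * Gs.card := by ring
          _ = _ := by rw [hq']
      rw [hTcard, hIeq] at master
      have hSolle : Sol.card ≤ (q - 1) * Gs.card := by linarith
      by_cases hBC : B = 0 ∧ C = 0
      · have hA : A ≠ 0 := by
          intro hA; exact hne (by simp [hA, hBC.1, hBC.2, hD, hE])
        have hGe : Gs = ∅ := by
          ext p
          simp only [hGdef, hgdef, hBC.1, hBC.2, Finset.mem_filter, Finset.mem_univ,
            true_and, Finset.notMem_empty, iff_false, zero_mul, add_zero]
          simpa using hA
        apply hfin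
        rw [hGe] at hSolle
        simpa using hSolle.trans (by simp)
      · apply hfin
        calc Sol.card ≤ (q - 1) * Gs.card := hSolle
          _ ≤ (q - 1) * (q - 1) := Nat.mul_le_mul_left _ (hGline hBC)
          _ = (q - 1) ^ 2 := (sq _).symm
    · -- D ≠ 0, E = 0 : T = ∅
      have hTe : T = ∅ := by
        ext p
        simp only [hTdef, hhdef, hE, zero_mul, add_zero, Finset.mem_filter,
          Finset.mem_univ, true_and, Finset.notMem_empty, iff_false]
        exact hD
      have hI0 : I = 0 := by rw [hIdef, hTe, Finset.empty_inter, Finset.card_empty]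
      apply hfin
      rw [hTe, hI0, Finset.card_empty, Nat.mul_zero, Nat.add_zero] at master
      linarith
  · by_cases hD : D = 0
    · -- D = 0, E ≠ 0 : T = ∅
      have hTe : T = ∅ := by
        ext p
        simp only [hTdef, hhdef, hD, zero_add, Finset.mem_filter, Finset.mem_univ,
          true_and, Finset.notMem_empty, iff_false]
        exact mul_ne_zero (mul_ne_zero hE (pow_ne_zero _ (Units.ne_zero _)))
          (pow_ne_zero _ (Units.ne_zero _))
      have hI0 : I = 0 := by rw [hIdef, hTe, Finset.empty_inter, Finset.card_empty]
      apply hfin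
      rw [hTe, hI0, Finset.card_empty, Nat.mul_zero, Nat.add_zero] at master
      linarith
    · -- main case : D ≠ 0, E ≠ 0
      have hDE : -(D / E) ≠ 0 := neg_ne_zero.mpr (div_ne_zero hD hE)
      have hTcard : T.card = q - 1 := by
        have h2 : ∀ p : Fˣ × Fˣ, h p = 0 ↔ p.1 ^ s * p.2 ^ t = Units.mk0 (-(D / E)) hDE := by
          intro p
          rw [hhdef, Units.ext_iff]
          push_cast [Units.val_mk0]
          constructor
          · intro hp
            field_simp
            linear_combination hp
          · intro hp
            field_simp at hp
            linear_combination hp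
        have h1 : T.card = Fintype.card {p : Fˣ × Fˣ // h p = 0} := by
          rw [hTdef]; exact (Fintype.card_subtype _).symm
        rw [h1, ← Nat.card_eq_fintype_card,
          Nat.card_congr (Equiv.subtypeEquivRight h2), fiber_card s t hst, ← hqdef]
      rw [hTcard] at master
      by_cases hBC : B = 0 ∧ C = 0
      · by_cases hA : A = 0
        · have hGuniv : Gs = Finset.univ := by
            ext p; simp [hGdef, hgdef, hA, hBC.1, hBC.2]
          have hIeq : I = q - 1 := by
            rw [hIdef, hGuniv, Finset.inter_univ]; exact hTcard
          have hGcard : Gs.card = (q - 1) ^ 2 := by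
            rw [hGuniv, Finset.card_univ, Fintype.card_prod, hcardU, sq]
          apply hfin
          have e : q * (q - 1) = (q - 1) ^ 2 + (q - 1) := by
            obtain ⟨a, ha⟩ : ∃ a, q = a + 3 := ⟨q - 3, by omega⟩
            have e1 : q - 1 = a + 2 := by omega
            rw [e1, ha]; ring
          rw [hIeq, hGcard] at master
          linarith
        · have hGe : Gs = ∅ := by
            ext p
            simp only [hGdef, hgdef, hBC.1, hBC.2, Finset.mem_filter, Finset.mem_univ,
              true_and, Finset.notMem_empty, iff_false, zero_mul, add_zero]
            simpa using hA
          have hI0 : I = 0 := by rw [hIdef, hGe, Finset.inter_empty, Finset.card_empty]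
          apply hfin
          rw [hGe, hI0, Finset.card_empty, Nat.mul_zero, Nat.add_zero] at master
          linarith
      · by_cases hI0 : I = 0
        · apply hfin
          rw [hI0, Nat.mul_zero, Nat.add_zero] at master
          linarith
        · -- hard case
          have hmem : ∀ p ∈ T ∩ Gs, h p = 0 ∧ g p = 0 := by
            intro p hp
            simp only [Finset.mem_inter, hTdef, hGdef, Finset.mem_filter,
              Finset.mem_univ, true_and] at hp
            exact hp
          obtain ⟨p0, hp0⟩ : (T ∩ Gs).Nonempty :=
            Finset.card_pos.mp (Nat.pos_of_ne_zero (by rw [← hIdef]; exact hI0))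
          obtain ⟨hp0T, hp0G⟩ := hmem p0 hp0
          have key : I ≤ s + t ∧ q - 2 ≤ Gs.card := by
            by_cases hC : C = 0
            · -- B ≠ 0, C = 0
              have hB : B ≠ 0 := fun hB' => hBC ⟨hB', hC⟩
              have hgp0 : A + B * (p0.1 : F) = 0 := by
                have h' := hp0G
                simp only [hgdef, hC, zero_mul, add_zero] at h'
                exact h'
              have hA : A ≠ 0 := by
                intro hA0
                rw [hA0, zero_add] at hgp0
                exact (mul_ne_zero hB (Units.ne_zero p0.1)) hgp0
              have hx : ∀ p ∈ T ∩ Gs, p.1 = p0.1 := by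
                intro p hp
                obtain ⟨hpT, hpG⟩ := hmem p hp
                simp only [hgdef, hC, zero_mul, add_zero] at hpG
                have hBx : B * (p.1 : F) = B * (p0.1 : F) := by
                  linear_combination hpG - hgp0
                exact Units.ext (mul_left_cancel₀ hB hBx)
              constructor
              · have ht1 : 1 ≤ t := le_trans hs hst'
                set Q : Polynomial F := Polynomial.C (E * (p0.1 : F) ^ s)
                    * Polynomial.X ^ t - Polynomial.C (-D) with hQdef
                have hQne : Q ≠ 0 := by
                  intro hQ0
                  have h0 := congrArg (Polynomial.eval 0) hQ0
                  simp [hQdef, zero_pow (by omega : t ≠ 0)] at h0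
                  exact hD h0
                have hQdeg : Q.natDegree ≤ t := by
                  apply le_trans (Polynomial.natDegree_sub_le _ _)
                  simp only [Polynomial.natDegree_C, max_le_iff]
                  refine ⟨le_trans (Polynomial.natDegree_C_mul_le _ _) (by simp), Nat.zero_le _⟩
                have hIt : I ≤ t := by
                  rw [hIdef]
                  apply card_le_natDegree (T ∩ Gs) Q hQne t hQdeg (fun p => (p.2 : F))
                  · intro p hp
                    obtain ⟨hpT, hpG⟩ := hmem p hp
                    simp only [hhdef] at hpT
                    rw [hx p hp] at hpT
                    simp only [hQdef, Polynomial.eval_sub, Polynomial.eval_mul,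
                      Polynomial.eval_pow, Polynomial.eval_C, Polynomial.eval_X]
                    linear_combination hpT
                  · intro p hp w hw hpw
                    have hy : (p.2 : F) = (w.2 : F) := hpw
                    have hxx : p.1 = w.1 := by
                      rw [hx p (Finset.mem_coe.mp hp), hx w (Finset.mem_coe.mp hw)]
                    exact Prod.ext hxx (Units.ext hy)
                omega
              · have hle : (Finset.univ : Finset Fˣ).card ≤ Gs.card := by
                  apply Finset.card_le_card_of_injOn (fun y => (p0.1, y))
                  · intro y _
                    simp only [Finset.mem_coe, hGdef, Finset.mem_filter, Finset.mem_univ, true_and,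
                      hgdef, hC, zero_mul, add_zero]
                    exact hgp0
                  · intro y _ z _ hyz
                    exact congrArg Prod.snd hyz
                omega
            · -- C ≠ 0
              have hABn : ¬(A = 0 ∧ B = 0) := by
                rintro ⟨hA0, hB0⟩
                have h' := hp0G
                simp only [hgdef, hA0, hB0, zero_mul, add_zero, zero_add] at h'
                rcases mul_eq_zero.mp h' with h'' | h''
                · exact hC h''
                · exact Units.ne_zero _ h''
              constructor
              · have hk : (-(D / E)) * (-C) ^ t ≠ 0 :=
                  mul_ne_zero hDE (pow_ne_zero _ (neg_ne_zero.mpr hC))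
                set P : Polynomial F := Polynomial.X ^ s *
                    (Polynomial.C A + Polynomial.C B * Polynomial.X) ^ t
                    - Polynomial.C ((-(D / E)) * (-C) ^ t) with hPdef
                have hPne : P ≠ 0 := by
                  intro h0
                  have h1 := congrArg (Polynomial.eval 0) h0
                  simp only [hPdef, Polynomial.eval_sub, Polynomial.eval_mul,
                    Polynomial.eval_pow, Polynomial.eval_add, Polynomial.eval_C,
                    Polynomial.eval_X, Polynomial.eval_zero,
                    zero_pow (by omega : s ≠ 0), zero_mul, zero_sub, neg_eq_zero] at h1
                  exact hk h1
                have hPdeg : P.natDegree ≤ s + t := by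
                  apply le_trans (Polynomial.natDegree_sub_le _ _)
                  simp only [Polynomial.natDegree_C, max_le_iff]
                  constructor
                  · apply le_trans (Polynomial.natDegree_mul_le)
                    have h1 : (Polynomial.X ^ s : Polynomial F).natDegree ≤ s := by
                      simp [Polynomial.natDegree_X_pow]
                    have h2 : ((Polynomial.C A + Polynomial.C B * Polynomial.X :
                        Polynomial F) ^ t).natDegree ≤ t := by
                      apply le_trans (Polynomial.natDegree_pow_le)
                      have h3 : (Polynomial.C A + Polynomial.C B * Polynomial.X :
                          Polynomial F).natDegree ≤ 1 := by
                        apply le_trans (Polynomial.natDegree_add_le _ _)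
                        simp only [Polynomial.natDegree_C, max_le_iff]
                        exact ⟨Nat.zero_le _,
                          le_trans (Polynomial.natDegree_C_mul_le _ _) (by simp)⟩
                      calc t * (Polynomial.C A + Polynomial.C B * Polynomial.X :
                          Polynomial F).natDegree ≤ t * 1 := Nat.mul_le_mul_left _ h3
                        _ = t := by ring
                    omega
                  · omega
                rw [hIdef]
                apply card_le_natDegree (T ∩ Gs) P hPne (s + t) hPdeg (fun p => (p.1 : F))
                · intro p hp
                  obtain ⟨hpT, hpG⟩ := hmem p hp
                  simp only [hhdef] at hpT
                  simp only [hgdef] at hpG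
                  have e2 : (p.1 : F) ^ s * (p.2 : F) ^ t = -(D / E) := by
                    field_simp
                    linear_combination hpT
                  have e1 : (A + B * (p.1 : F)) = -C * (p.2 : F) := by
                    linear_combination hpG
                  have e1t : (A + B * (p.1 : F)) ^ t = (-C) ^ t * (p.2 : F) ^ t := by
                    rw [e1, mul_pow]
                  simp only [hPdef, Polynomial.eval_sub, Polynomial.eval_mul,
                    Polynomial.eval_pow, Polynomial.eval_add, Polynomial.eval_C,
                    Polynomial.eval_X]
                  linear_combination (p.1 : F) ^ s * e1t + (-C) ^ t * e2
                · intro p hp w hw hpw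
                  have hx1 : (p.1 : F) = (w.1 : F) := hpw
                  have hgp := (hmem p (Finset.mem_coe.mp hp)).2
                  have hgw := (hmem w (Finset.mem_coe.mp hw)).2
                  simp only [hgdef] at hgp hgw
                  rw [hx1] at hgp
                  have hCy : C * (p.2 : F) = C * (w.2 : F) := by
                    linear_combination hgp - hgw
                  exact Prod.ext (Units.ext hx1) (Units.ext (mul_left_cancel₀ hC hCy))
              · have hbad : (Finset.univ.filter
                    (fun x : Fˣ => A + B * (x : F) = 0)).card ≤ 1 := by
                  by_cases hB : B = 0
                  · have hA : A ≠ 0 := fun hA' => hABn ⟨hA', hB⟩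
                    have he : (Finset.univ.filter
                        (fun x : Fˣ => A + B * (x : F) = 0)) = ∅ := by
                      ext x
                      simp only [Finset.mem_filter, Finset.mem_univ, true_and, hB,
                        zero_mul, add_zero, Finset.notMem_empty, iff_false]
                      exact hA
                    rw [he]; simp
                  · apply Finset.card_le_one.mpr
                    intro x hx' y hy'
                    simp only [Finset.mem_filter, Finset.mem_univ, true_and] at hx' hy'
                    have hBxy : B * (x : F) = B * (y : F) := by
                      linear_combination hx' - hy'
                    exact Units.ext (mul_left_cancel₀ hB hBxy)
                have hsum := Finset.card_filter_add_card_filter_not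
                  (s := (Finset.univ : Finset Fˣ)) (p := fun x : Fˣ => A + B * (x : F) = 0)
                have hXcard : q - 2 ≤ (Finset.univ.filter
                    (fun x : Fˣ => ¬ A + B * (x : F) = 0)).card := by omega
                refine le_trans hXcard (Finset.card_le_card_of_injOn
                  (fun x => (x, if hx : A + B * (x : F) = 0 then 1
                    else Units.mk0 (-(A + B * (x : F)) / C)
                      (div_ne_zero (neg_ne_zero.mpr hx) hC))) ?_ ?_)
                · intro x hx
                  simp only [Finset.mem_coe, Finset.mem_filter, Finset.mem_univ, true_and] at hx
                  simp only [Finset.mem_coe, hGdef, Finset.mem_filter, Finset.mem_univ,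
                    true_and, hgdef, dif_neg hx, Units.val_mk0]
                  field_simp
                  ring
                · intro x _ y _ hxy
                  exact congrArg Prod.fst hxy
          obtain ⟨hIle, hGge⟩ := key
          have hqIle : q * I ≤ q * (s + t) := Nat.mul_le_mul_left _ hIle
          obtain ⟨a, ha⟩ : ∃ a, q = a + 3 := ⟨q - 3, by omega⟩
          have e1 : q - 1 = a + 2 := by omega
          have e2 : q - 2 = a + 1 := by omega
          have keyeq : (q - 1) ^ 2 + q * (s + t)
              = (q - 2) ^ 2 + (s + t) * q + (q - 1) + (q - 2) := by
            rw [e1, e2, ha]; ring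
          linarith
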